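/- Let (δ_i)_{i≥1}, (ℓ_i)_{i≥1} and N(λ), L(λ), S be as in the context. Then there exists a constant C > 0, depending only on S, such that for all λ ≥ 1: | N(λ) − (λ/(4π))·Σ_{i : δ_i√λ > π} ℓ_i·δ_i | ≤ C·(1 + L(λ))·√λ. -/

import Mathlib

open Real

/-- The number of triples of positive integers `(i, m, n)` with
`π²n²/δᵢ² + π²m²/ℓᵢ² < λ`. -/
noncomputable def spectralCount (δ ℓ : ℕ+ → ℝ) (lam : ℝ) : ℕ :=
  Nat.card {p : ℕ+ × ℕ+ × ℕ+ //
    π ^ 2 * ((p.2.2 : ℕ) : ℝ) ^ 2 / (δ p.1) ^ 2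
      + π ^ 2 * ((p.2.1 : ℕ) : ℝ) ^ 2 / (ℓ p.1) ^ 2 < lam}

/-- The effective length `L(λ) = 2 Σ_{i : δᵢ√λ > π} ℓᵢ`. -/
noncomputable def effLength (δ ℓ : ℕ+ → ℝ) (lam : ℝ) : ℝ :=
  2 * ∑ᶠ i ∈ {i : ℕ+ | δ i * Real.sqrt lam > π}, ℓ i


lemma finite_pnat_lt (c : ℝ) : Finite {m : ℕ+ // ((m : ℕ) : ℝ) < c} := by
  refine Finite.of_injective (fun x => (⟨(x.1 : ℕ) - 1, ?_⟩ : Fin ⌈c⌉₊)) ?_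
  · have h1 := Nat.lt_ceil.2 x.2
    have h2 : 1 ≤ (x.1 : ℕ) := x.1.one_le
    omega
  · rintro ⟨x, hx⟩ ⟨y, hy⟩ h
    simp only [Fin.mk.injEq] at h
    have hx2 : 1 ≤ (x : ℕ) := x.one_le
    have hy2 : 1 ≤ (y : ℕ) := y.one_le
    have : (x : ℕ) = (y : ℕ) := by omega
    exact Subtype.ext (PNat.coe_injective this)

lemma card_pnat_lt (c : ℝ) :
    Nat.card {m : ℕ+ // ((m : ℕ) : ℝ) < c} = ⌈c⌉₊ - 1 := by
  have e : {m : ℕ+ // ((m : ℕ) : ℝ) < c} ≃ (Set.Ioo 0 ⌈c⌉₊ : Set ℕ) :=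
    { toFun := fun x => ⟨(x.1 : ℕ), ⟨x.1.2, Nat.lt_ceil.2 x.2⟩⟩
      invFun := fun x => ⟨⟨x.1, x.2.1⟩, Nat.lt_ceil.1 x.2.2⟩
      left_inv := fun x => rfl
      right_inv := fun x => rfl }
  rw [Nat.card_congr e, Nat.card_coe_set_eq, ← Finset.coe_Ioo, Set.ncard_coe_finset,
    Nat.card_Ioo]
  omega

lemma cast_ceil_sub_one_le {c : ℝ} (hc : 0 ≤ c) : ((⌈c⌉₊ - 1 : ℕ) : ℝ) ≤ c := by
  rcases Nat.eq_zero_or_pos ⌈c⌉₊ with h | h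
  · simp [h, hc]
  · have h1 : ((⌈c⌉₊ : ℕ) : ℝ) < c + 1 := Nat.ceil_lt_add_one hc
    have h2 : ((⌈c⌉₊ - 1 : ℕ) : ℝ) = (⌈c⌉₊ : ℝ) - 1 := by
      rw [Nat.cast_sub h]; norm_num
    rw [h2]; linarith

lemma le_cast_ceil_sub_one {c : ℝ} (hc : 0 ≤ c) : c - 1 ≤ ((⌈c⌉₊ - 1 : ℕ) : ℝ) := by
  rcases Nat.eq_zero_or_pos ⌈c⌉₊ with h | h
  · have h1 : c ≤ 0 := by exact_mod_cast Nat.ceil_eq_zero.1 h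
    have hc0 : c = 0 := le_antisymm h1 hc
    simp [h, hc0]
  · have h1 : c ≤ (⌈c⌉₊ : ℝ) := Nat.le_ceil c
    have h2 : ((⌈c⌉₊ - 1 : ℕ) : ℝ) = (⌈c⌉₊ : ℝ) - 1 := by
      rw [Nat.cast_sub h]; norm_num
    rw [h2]; linarith

lemma slice_iff {a b n m : ℝ} (hb : 0 < b) (hm : 0 ≤ m) :
    n^2/a^2 + m^2/b^2 < 1 ↔ m < b * Real.sqrt (1 - n^2/a^2) := by
  rw [mul_comm, ← div_lt_iff₀ hb, Real.lt_sqrt (by positivity), div_pow]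
  constructor <;> intro h <;> linarith

lemma lt_of_slice {a b n m : ℝ} (ha : 0 < a) (hb : 0 < b) (hm : 0 < m) (hn : 0 ≤ n)
    (h : n^2/a^2 + m^2/b^2 < 1) : n < a := by
  have h0 : 0 < m^2/b^2 := by positivity
  have h1 : n^2/a^2 < 1 := by linarith
  have h2 : n^2 < a^2 := (div_lt_one (by positivity)).1 h1
  exact lt_of_pow_lt_pow_left₀ 2 ha.le h2

noncomputable def ellipseEquiv {a b : ℝ} (ha : 0 < a) (hb : 0 < b) :
    {p : ℕ+ × ℕ+ // ((p.2 : ℕ) : ℝ)^2/a^2 + ((p.1 : ℕ) : ℝ)^2/b^2 < 1} ≃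
      Σ n : {n : ℕ+ // ((n : ℕ) : ℝ) < a},
        {m : ℕ+ // ((m : ℕ) : ℝ) < b * Real.sqrt (1 - ((n.1 : ℕ) : ℝ)^2/a^2)} where
  toFun x := ⟨⟨x.1.2, lt_of_slice ha hb (by exact_mod_cast x.1.1.2) (by positivity) x.2⟩,
    ⟨x.1.1, (slice_iff hb (by positivity)).1 x.2⟩⟩
  invFun y := ⟨(y.2.1, y.1.1), (slice_iff hb (by positivity)).2 y.2.2⟩
  left_inv x := rfl
  right_inv y := rfl

lemma ellipseFinite {a b : ℝ} (ha : 0 < a) (hb : 0 < b) :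
    Finite {p : ℕ+ × ℕ+ // ((p.2 : ℕ) : ℝ)^2/a^2 + ((p.1 : ℕ) : ℝ)^2/b^2 < 1} := by
  haveI := finite_pnat_lt a
  haveI : ∀ n : {n : ℕ+ // ((n : ℕ) : ℝ) < a},
      Finite {m : ℕ+ // ((m : ℕ) : ℝ) < b * Real.sqrt (1 - ((n.1 : ℕ) : ℝ)^2/a^2)} :=
    fun n => finite_pnat_lt _
  exact Finite.of_equiv _ (ellipseEquiv ha hb).symm

noncomputable def rowEquiv (a : ℝ) : Fin (⌈a⌉₊ - 1) ≃ {n : ℕ+ // ((n : ℕ) : ℝ) < a} where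
  toFun j := ⟨⟨(j : ℕ) + 1, Nat.succ_pos _⟩, by
    have h1 : (j : ℕ) < ⌈a⌉₊ - 1 := j.2
    have h3 : (j : ℕ) + 1 < ⌈a⌉₊ := by omega
    exact Nat.lt_ceil.1 h3⟩
  invFun x := ⟨(x.1 : ℕ) - 1, by
    have h1 := Nat.lt_ceil.2 x.2
    have h2 : 1 ≤ (x.1 : ℕ) := x.1.one_le
    omega⟩
  left_inv j := Fin.ext (show ((j : ℕ) + 1) - 1 = (j : ℕ) by omega)
  right_inv x := Subtype.ext (PNat.coe_injective
    (show ((x.1 : ℕ) - 1) + 1 = (x.1 : ℕ) by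
      have h : 1 ≤ (x.1 : ℕ) := x.1.one_le
      omega))

lemma ellipseCard {a b : ℝ} (ha : 0 < a) (hb : 0 < b) :
    Nat.card {p : ℕ+ × ℕ+ // ((p.2 : ℕ) : ℝ)^2/a^2 + ((p.1 : ℕ) : ℝ)^2/b^2 < 1}
      = ∑ j ∈ Finset.range (⌈a⌉₊ - 1),
          (⌈b * Real.sqrt (1 - ((j + 1 : ℕ) : ℝ)^2/a^2)⌉₊ - 1) := by
  haveI := finite_pnat_lt a
  haveI F1 : Fintype {n : ℕ+ // ((n : ℕ) : ℝ) < a} := Fintype.ofFinite _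
  haveI : ∀ n : {n : ℕ+ // ((n : ℕ) : ℝ) < a},
      Fintype {m : ℕ+ // ((m : ℕ) : ℝ) < b * Real.sqrt (1 - ((n.1 : ℕ) : ℝ)^2/a^2)} :=
    fun n => @Fintype.ofFinite _ (finite_pnat_lt _)
  rw [Nat.card_congr (ellipseEquiv ha hb), Nat.card_eq_fintype_card, Fintype.card_sigma]
  have step : ∀ n : {n : ℕ+ // ((n : ℕ) : ℝ) < a},
      Fintype.card {m : ℕ+ // ((m : ℕ) : ℝ) < b * Real.sqrt (1 - ((n.1 : ℕ) : ℝ)^2/a^2)}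
        = ⌈b * Real.sqrt (1 - ((n.1 : ℕ) : ℝ)^2/a^2)⌉₊ - 1 := by
    intro n
    rw [← Nat.card_eq_fintype_card, card_pnat_lt]
  simp_rw [step]
  rw [← Fintype.sum_equiv (rowEquiv a)
    (fun j : Fin (⌈a⌉₊ - 1) => ⌈b * Real.sqrt (1 - (((j : ℕ) + 1 : ℕ) : ℝ)^2/a^2)⌉₊ - 1)
    (fun n => ⌈b * Real.sqrt (1 - ((n.1 : ℕ) : ℝ)^2/a^2)⌉₊ - 1)
    (fun j => rfl)]
  exact Fin.sum_univ_eq_sum_range (fun j => ⌈b * Real.sqrt (1 - ((j + 1 : ℕ) : ℝ)^2/a^2)⌉₊ - 1) _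

lemma integral_quarter : ∫ x in (0:ℝ)..1, Real.sqrt (1 - x^2) = π/4 := by
  have hc : Continuous fun x : ℝ => Real.sqrt (1 - x^2) := by
    exact Real.continuous_sqrt.comp (by continuity)
  have h1 : ∫ x in (0:ℝ)..1, Real.sqrt (1 - (-x)^2) = ∫ x in (-1:ℝ)..(-0:ℝ), Real.sqrt (1 - x^2) :=
    intervalIntegral.integral_comp_neg (a := 0) (b := 1) (fun x => Real.sqrt (1 - x^2))
  simp only [neg_sq, neg_zero] at h1
  have h2 := intervalIntegral.integral_add_adjacent_intervals
    (a := (-1:ℝ)) (b := 0) (c := 1) (μ := MeasureTheory.volume)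
    (hc.intervalIntegrable (-1) 0) (hc.intervalIntegrable 0 1)
  rw [integral_sqrt_one_sub_sq] at h2
  linarith

lemma integral_ellipse {a b : ℝ} (ha : 0 < a) (hb : 0 < b) :
    ∫ x in (0:ℝ)..a, b * Real.sqrt (1 - x^2/a^2) = π * (a*b)/4 := by
  have h1 : ∀ x : ℝ, b * Real.sqrt (1 - x^2/a^2) = b * Real.sqrt (1 - (x/a)^2) := by
    intro x; rw [div_pow]
  simp only [h1]
  rw [intervalIntegral.integral_const_mul]
  have h2 := intervalIntegral.integral_comp_div (a := 0) (b := a) (c := a)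
    (fun u => Real.sqrt (1 - u^2)) ha.ne'
  rw [h2, zero_div, div_self ha.ne', integral_quarter]
  simp only [smul_eq_mul]
  ring

lemma ellipseCount_bound {a b : ℝ} (ha : 1 < a) (hb : 0 < b) :
    |(Nat.card {p : ℕ+ × ℕ+ // ((p.2 : ℕ) : ℝ)^2/a^2 + ((p.1 : ℕ) : ℝ)^2/b^2 < 1} : ℝ)
      - π * (a*b)/4| ≤ a + b := by
  have ha0 : 0 < a := lt_trans one_pos ha
  set f : ℝ → ℝ := fun x => b * Real.sqrt (1 - x^2/a^2) with hf
  set K : ℕ := ⌈a⌉₊ - 1 with hK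
  have hcl : ⌈a⌉₊ ≥ 1 := Nat.one_le_ceil_iff.2 ha0
  -- cardinality as a sum
  have hcard := ellipseCard ha0 hb
  -- basic bounds on K
  have hKa : ((K : ℕ) : ℝ) ≤ a := cast_ceil_sub_one_le ha0.le
  have hK1a : a ≤ (((K + 1 : ℕ)) : ℝ) := by
    have : K + 1 = ⌈a⌉₊ := by omega
    rw [this]; exact Nat.le_ceil a
  -- continuity and antitonicity
  have hcont : Continuous f := by
    apply Continuous.mul continuous_const
    exact Real.continuous_sqrt.comp (by continuity)
  have hint : ∀ u v : ℝ, IntervalIntegrable f MeasureTheory.volume u v :=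
    fun u v => hcont.intervalIntegrable u v
  have hant : AntitoneOn f (Set.Ici (0:ℝ)) := by
    intro x hx y hy hxy
    simp only [hf]
    have h1 : 1 - y^2/a^2 ≤ 1 - x^2/a^2 := by
      have h2 : x^2 ≤ y^2 := pow_le_pow_left₀ hx hxy 2
      have ha2 : (0:ℝ) < a^2 := by positivity
      have h3 : x^2/a^2 ≤ y^2/a^2 := by gcongr
      linarith
    exact mul_le_mul_of_nonneg_left (Real.sqrt_le_sqrt h1) hb.le
  -- sum/integral comparisons
  have h_upper := AntitoneOn.sum_le_integral (x₀ := 0) (a := K) (f := f)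
    (hant.mono (Set.Icc_subset_Ici_self))
  simp only [zero_add] at h_upper
  have h_lower := AntitoneOn.integral_le_sum (x₀ := 0) (a := K+1) (f := f)
    (hant.mono (Set.Icc_subset_Ici_self))
  simp only [zero_add] at h_lower
  have hsplit : ∑ i ∈ Finset.range (K+1), f ((i:ℕ):ℝ)
      = (∑ i ∈ Finset.range K, f (((i+1:ℕ)):ℝ)) + f ((0:ℕ):ℝ) :=
    Finset.sum_range_succ' (fun i : ℕ => f ((i:ℕ):ℝ)) K
  have hf0 : f ((0:ℕ):ℝ) = b := by simp [hf]
  -- integral monotonicity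
  have i1 : ∫ x in (0:ℝ)..((K:ℕ):ℝ), f x ≤ ∫ x in (0:ℝ)..a, f x := by
    have hadd := intervalIntegral.integral_add_adjacent_intervals (μ := MeasureTheory.volume)
      (hint 0 ((K:ℕ):ℝ)) (hint ((K:ℕ):ℝ) a)
    have hpos : 0 ≤ ∫ x in ((K:ℕ):ℝ)..a, f x :=
      intervalIntegral.integral_nonneg hKa (fun x _ => by positivity)
    linarith
  have i2 : ∫ x in (0:ℝ)..a, f x ≤ ∫ x in (0:ℝ)..(((K+1:ℕ)):ℝ), f x := by
    have hadd := intervalIntegral.integral_add_adjacent_intervals (μ := MeasureTheory.volume)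
      (hint 0 a) (hint a (((K+1:ℕ)):ℝ))
    have hpos : 0 ≤ ∫ x in a..(((K+1:ℕ)):ℝ), f x :=
      intervalIntegral.integral_nonneg hK1a (fun x _ => by positivity)
    linarith
  have ival : ∫ x in (0:ℝ)..a, f x = π*(a*b)/4 := integral_ellipse ha0 hb
  -- cardinality bounds
  have hNup : (Nat.card {p : ℕ+ × ℕ+ // ((p.2 : ℕ) : ℝ)^2/a^2 + ((p.1 : ℕ) : ℝ)^2/b^2 < 1} : ℝ)
      ≤ ∑ j ∈ Finset.range K, f (((j+1:ℕ)):ℝ) := by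
    rw [hcard, Nat.cast_sum]
    exact Finset.sum_le_sum (fun j _ => cast_ceil_sub_one_le (by positivity))
  have hNlow : (∑ j ∈ Finset.range K, f (((j+1:ℕ)):ℝ)) - K
      ≤ (Nat.card {p : ℕ+ × ℕ+ // ((p.2 : ℕ) : ℝ)^2/a^2 + ((p.1 : ℕ) : ℝ)^2/b^2 < 1} : ℝ) := by
    rw [hcard, Nat.cast_sum]
    have h1 : ∀ j ∈ Finset.range K, f (((j+1:ℕ)):ℝ) - 1
        ≤ ((⌈b * Real.sqrt (1 - ((j + 1 : ℕ) : ℝ)^2/a^2)⌉₊ - 1 : ℕ) : ℝ) :=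
      fun j _ => le_cast_ceil_sub_one (by positivity)
    have h2 : (∑ j ∈ Finset.range K, f (((j+1:ℕ)):ℝ)) - K
        = ∑ j ∈ Finset.range K, (f (((j+1:ℕ)):ℝ) - 1) := by
      rw [Finset.sum_sub_distrib, Finset.sum_const, Finset.card_range]
      simp
    rw [h2]
    exact Finset.sum_le_sum h1
  rw [abs_le]
  constructor
  · have hup2 : π*(a*b)/4 ≤ ∫ x in (0:ℝ)..(((K+1:ℕ)):ℝ), f x := by rw [← ival]; exact i2
    have := h_lower
    have hcast : (((K+1:ℕ)):ℝ) = ((K:ℕ):ℝ) + 1 := by push_cast; ring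
    linarith [hsplit, hf0, hNlow, hKa]
  · have hdn2 : ∫ x in (0:ℝ)..((K:ℕ):ℝ), f x ≤ π*(a*b)/4 := by rw [← ival]; exact i1
    have hab : 0 ≤ a + b := by positivity
    linarith [hNup, h_upper]

lemma cond_norm {d l lam : ℝ} (hd : 0 < d) (hl : 0 < l) (hlam : 0 < lam) (n m : ℝ) :
    (π^2 * n^2 / d^2 + π^2 * m^2 / l^2 < lam) ↔
    (n^2/(d * Real.sqrt lam / π)^2 + m^2/(l * Real.sqrt lam / π)^2 < 1) := by
  have hπ : (0:ℝ) < π := Real.pi_pos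
  have hs : 0 < Real.sqrt lam := Real.sqrt_pos.2 hlam
  have hs2 : Real.sqrt lam ^ 2 = lam := Real.sq_sqrt hlam.le
  rw [← div_lt_one hlam]
  have e1 : (d * Real.sqrt lam / π)^2 = d^2 * lam / π^2 := by
    rw [div_pow, mul_pow, hs2]
  have e2 : (l * Real.sqrt lam / π)^2 = l^2 * lam / π^2 := by
    rw [div_pow, mul_pow, hs2]
  have heq : (π^2 * n^2 / d^2 + π^2 * m^2 / l^2) / lam
      = n^2/(d * Real.sqrt lam / π)^2 + m^2/(l * Real.sqrt lam / π)^2 := by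
    rw [e1, e2]
    field_simp
  rw [heq]

lemma mem_T {d l lam : ℝ} (hd : 0 < d) (hl : 0 < l) (hlam : 0 < lam) {n m : ℝ}
    (hn : 1 ≤ n) (hm : 0 < m)
    (h : π^2 * n^2 / d^2 + π^2 * m^2 / l^2 < lam) : π < d * Real.sqrt lam := by
  have hπ : (0:ℝ) < π := Real.pi_pos
  have h2 := (cond_norm hd hl hlam n m).1 h
  have hA : 0 < d * Real.sqrt lam / π := by
    have := Real.sqrt_pos.2 hlam; positivity
  have h3 : 0 < m^2/(l * Real.sqrt lam / π)^2 := by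
    have := Real.sqrt_pos.2 hlam; positivity
  have h4 : n^2/(d * Real.sqrt lam / π)^2 < 1 := by linarith
  rw [div_lt_one (by positivity)] at h4
  have h5 : 1 ≤ n^2 := by nlinarith
  have h6 : 1 < d * Real.sqrt lam / π :=
    lt_of_pow_lt_pow_left₀ 2 hA.le (by nlinarith)
  exact (one_lt_div hπ).1 h6

theorem stmt_2 (S : ℝ) :
    ∃ C > (0 : ℝ), ∀ δ ℓ : ℕ+ → ℝ, (∀ i, 0 < δ i) → (∀ i, 0 < ℓ i) →
      Summable δ → ∑' i, δ i = S →
      ∀ lam : ℝ, 1 ≤ lam →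
        |(spectralCount δ ℓ lam : ℝ)
            - lam / (4 * π) * ∑ᶠ i ∈ {i : ℕ+ | δ i * Real.sqrt lam > π}, ℓ i * δ i|
          ≤ C * (1 + effLength δ ℓ lam) * Real.sqrt lam := by
  refine ⟨|S| + 1, by positivity, ?_⟩
  intro δ ℓ hδ hℓ hsum hS lam hlam
  have hπ : (0:ℝ) < π := Real.pi_pos
  have hπ1 : (1:ℝ) < π := by
    have := Real.pi_gt_three; linarith
  have hlam0 : (0:ℝ) < lam := by linarith
  have hs0 : 0 < Real.sqrt lam := Real.sqrt_pos.2 hlam0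
  have hs2 : Real.sqrt lam ^ 2 = lam := Real.sq_sqrt hlam0.le
  set T := {i : ℕ+ | δ i * Real.sqrt lam > π} with hTdef
  -- T is finite
  have hT : T.Finite := by
    have h1 : ∀ᶠ i in Filter.cofinite, δ i < π / Real.sqrt lam :=
      hsum.tendsto_cofinite_zero.eventually
        (eventually_lt_nhds (show (0:ℝ) < π / Real.sqrt lam by positivity))
    rw [Filter.eventually_cofinite] at h1
    apply h1.subset
    intro i hi
    have hgt : π < δ i * Real.sqrt lam := hi
    intro hcon
    have : δ i * Real.sqrt lam < π := (lt_div_iff₀ hs0).1 hcon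
    linarith
  haveI : Fintype ↥T := hT.fintype
  set A : ℕ+ → ℝ := fun i => δ i * Real.sqrt lam / π with hA
  set B : ℕ+ → ℝ := fun i => ℓ i * Real.sqrt lam / π with hB
  have hApos : ∀ i, 0 < A i := fun i => by
    show 0 < δ i * Real.sqrt lam / π
    have := hδ i; positivity
  have hBpos : ∀ i, 0 < B i := fun i => by
    show 0 < ℓ i * Real.sqrt lam / π
    have := hℓ i; positivity
  have hA1 : ∀ i ∈ T, 1 < A i := by
    intro i hi
    have hgt : π < δ i * Real.sqrt lam := hi
    show 1 < δ i * Real.sqrt lam / π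
    exact (one_lt_div hπ).2 hgt
  -- the big equiv
  have E : {p : ℕ+ × ℕ+ × ℕ+ //
      π ^ 2 * ((p.2.2 : ℕ) : ℝ) ^ 2 / (δ p.1) ^ 2
        + π ^ 2 * ((p.2.1 : ℕ) : ℝ) ^ 2 / (ℓ p.1) ^ 2 < lam} ≃
      Σ i : ↥T, {q : ℕ+ × ℕ+ //
        ((q.2 : ℕ) : ℝ)^2/(A i.1)^2 + ((q.1 : ℕ) : ℝ)^2/(B i.1)^2 < 1} :=
    { toFun := fun x => ⟨⟨x.1.1, mem_T (hδ x.1.1) (hℓ x.1.1) hlam0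
        (by exact_mod_cast x.1.2.2.one_le) (by positivity) x.2⟩,
        ⟨x.1.2, (cond_norm (hδ x.1.1) (hℓ x.1.1) hlam0 _ _).1 x.2⟩⟩
      invFun := fun y => ⟨(y.1.1, y.2.1),
        (cond_norm (hδ y.1.1) (hℓ y.1.1) hlam0 _ _).2 y.2.2⟩
      left_inv := fun x => rfl
      right_inv := fun y => rfl }
  haveI : ∀ i : ↥T, Finite {q : ℕ+ × ℕ+ //
      ((q.2 : ℕ) : ℝ)^2/(A i.1)^2 + ((q.1 : ℕ) : ℝ)^2/(B i.1)^2 < 1} :=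
    fun i => ellipseFinite (hApos i.1) (hBpos i.1)
  haveI F2 : ∀ i : ↥T, Fintype {q : ℕ+ × ℕ+ //
      ((q.2 : ℕ) : ℝ)^2/(A i.1)^2 + ((q.1 : ℕ) : ℝ)^2/(B i.1)^2 < 1} :=
    fun i => Fintype.ofFinite _
  have hNcard : spectralCount δ ℓ lam
      = ∑ i ∈ hT.toFinset, Nat.card {q : ℕ+ × ℕ+ //
          ((q.2 : ℕ) : ℝ)^2/(A i)^2 + ((q.1 : ℕ) : ℝ)^2/(B i)^2 < 1} := by
    rw [spectralCount, Nat.card_congr E, Nat.card_eq_fintype_card, Fintype.card_sigma]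
    rw [Finset.sum_subtype hT.toFinset (fun i => hT.mem_toFinset)
      (fun i => Nat.card {q : ℕ+ × ℕ+ //
          ((q.2 : ℕ) : ℝ)^2/(A i)^2 + ((q.1 : ℕ) : ℝ)^2/(B i)^2 < 1})]
    exact Finset.sum_congr rfl (fun i _ => Nat.card_eq_fintype_card.symm)
  -- finsum rewriting
  have hfin1 : ∑ᶠ i ∈ T, ℓ i * δ i = ∑ i ∈ hT.toFinset, ℓ i * δ i :=
    finsum_mem_eq_finite_toFinset_sum _ hT
  have hLeq : effLength δ ℓ lam = 2 * ∑ i ∈ hT.toFinset, ℓ i := by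
    rw [effLength, ← hTdef, finsum_mem_eq_finite_toFinset_sum _ hT]
  have hLpos : 0 ≤ ∑ i ∈ hT.toFinset, ℓ i :=
    Finset.sum_nonneg (fun i _ => (hℓ i).le)
  have hDpos : 0 ≤ ∑ i ∈ hT.toFinset, δ i :=
    Finset.sum_nonneg (fun i _ => (hδ i).le)
  -- per-index main term identity
  have hss : Real.sqrt lam * Real.sqrt lam = lam := Real.mul_self_sqrt hlam0.le
  have hmain : ∀ i, π * (A i * B i)/4 = lam/(4*π) * (ℓ i * δ i) := by
    intro i
    show π * (δ i * Real.sqrt lam / π * (ℓ i * Real.sqrt lam / π)) / 4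
        = lam/(4*π) * (ℓ i * δ i)
    have e : δ i * Real.sqrt lam / π * (ℓ i * Real.sqrt lam / π)
        = δ i * ℓ i * lam / π^2 := by
      calc δ i * Real.sqrt lam / π * (ℓ i * Real.sqrt lam / π)
          = δ i * ℓ i * (Real.sqrt lam * Real.sqrt lam) / π^2 := by ring
        _ = δ i * ℓ i * lam / π^2 := by rw [hss]
    rw [e]
    field_simp
  -- key bound
  have key : ∀ i ∈ hT.toFinset,
      |(Nat.card {q : ℕ+ × ℕ+ //
          ((q.2 : ℕ) : ℝ)^2/(A i)^2 + ((q.1 : ℕ) : ℝ)^2/(B i)^2 < 1} : ℝ)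
        - lam/(4*π) * (ℓ i * δ i)| ≤ A i + B i := by
    intro i hi
    rw [← hmain i]
    exact ellipseCount_bound (hA1 i (hT.mem_toFinset.1 hi)) (hBpos i)
  -- assemble
  rw [hNcard, hfin1, Nat.cast_sum, Finset.mul_sum, ← Finset.sum_sub_distrib]
  calc |∑ i ∈ hT.toFinset, ((Nat.card {q : ℕ+ × ℕ+ //
          ((q.2 : ℕ) : ℝ)^2/(A i)^2 + ((q.1 : ℕ) : ℝ)^2/(B i)^2 < 1} : ℝ)
        - lam/(4*π) * (ℓ i * δ i))|
      ≤ ∑ i ∈ hT.toFinset, |(Nat.card {q : ℕ+ × ℕ+ //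
          ((q.2 : ℕ) : ℝ)^2/(A i)^2 + ((q.1 : ℕ) : ℝ)^2/(B i)^2 < 1} : ℝ)
        - lam/(4*π) * (ℓ i * δ i)| := Finset.abs_sum_le_sum_abs _ _
    _ ≤ ∑ i ∈ hT.toFinset, (A i + B i) := Finset.sum_le_sum key
    _ ≤ (|S| + 1) * (1 + effLength δ ℓ lam) * Real.sqrt lam := by
        have hsumAB : ∑ i ∈ hT.toFinset, (A i + B i)
            = ((∑ i ∈ hT.toFinset, δ i) + ∑ i ∈ hT.toFinset, ℓ i) * Real.sqrt lam / π := by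
          rw [Finset.sum_add_distrib]
          simp only [hA, hB]
          rw [← Finset.sum_div, ← Finset.sum_div, ← Finset.sum_mul, ← Finset.sum_mul]
          ring
        have hδS : ∑ i ∈ hT.toFinset, δ i ≤ S := by
          rw [← hS]
          exact Summable.sum_le_tsum hT.toFinset (fun i _ => (hδ i).le) hsum
        have hSabs : S ≤ |S| := le_abs_self S
        have hSabs0 : 0 ≤ |S| := abs_nonneg S
        set D := ∑ i ∈ hT.toFinset, δ i
        set L2 := ∑ i ∈ hT.toFinset, ℓ i
        rw [hsumAB, hLeq]
        have h1 : (D + L2) * Real.sqrt lam / π ≤ (D + L2) * Real.sqrt lam := by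
          rw [div_le_iff₀ hπ]
          nlinarith [mul_nonneg (add_nonneg hDpos hLpos) hs0.le]
        have h2 : (D + L2) * Real.sqrt lam
            ≤ (|S| + 1) * (1 + 2 * L2) * Real.sqrt lam := by
          apply mul_le_mul_of_nonneg_right _ hs0.le
          nlinarith
        linarith
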